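/- Let B ≥ 2 be an integer and n ≥ 1. If h : Δ_n → ℝ is bounded, barycentrically B-almost convex, and satisfies h(e_k) ≤ 0 at every vertex e_k of Δ_n, then h(x_0,…,x_n) ≤ ∑_{k=0}^n H_B(x_k) for all (x_0,…,x_n) ∈ Δ_n. -/

import Mathlib

open scoped BigOperators

/-- `H_B(x) = ∑_{k=0}^∞ {B^k x}/B^k` where `{y}` is the fractional part. -/
noncomputable def HB (B : ℕ) (x : ℝ) : ℝ :=
  ∑' k : ℕ, Int.fract ((B : ℝ) ^ k * x) / (B : ℝ) ^ k

namespace Stmt4Aux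
open Finset


/-- digit `i+1` of `x` in base `B` -/
noncomputable def dN (B : ℕ) (x : ℝ) (i : ℕ) : ℕ :=
  (⌊(B:ℝ)^(i+1) * x⌋ - B * ⌊(B:ℝ)^i * x⌋).toNat

lemma fract_pow_fract {B : ℕ} (m : ℕ) (x : ℝ) :
    Int.fract ((B:ℝ)^m * Int.fract ((B:ℝ) * x)) = Int.fract ((B:ℝ)^(m+1) * x) := by
  have : (B:ℝ)^m * Int.fract ((B:ℝ)*x)
      = (B:ℝ)^(m+1)*x - (((B:ℕ)^m : ℤ) * ⌊(B:ℝ)*x⌋ : ℤ) := by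
    rw [Int.fract]; push_cast; ring
  rw [this, Int.fract_sub_intCast]

lemma dN_cast {B : ℕ} (hB : 2 ≤ B) (x : ℝ) (hx : 0 ≤ x) (i : ℕ) :
    (dN B x i : ℝ) = (B:ℝ) * Int.fract ((B:ℝ)^i * x) - Int.fract ((B:ℝ)^(i+1) * x) := by
  have hz : ((⌊(B:ℝ)^(i+1) * x⌋ - B * ⌊(B:ℝ)^i * x⌋ : ℤ) : ℝ)
      = (B:ℝ) * Int.fract ((B:ℝ)^i * x) - Int.fract ((B:ℝ)^(i+1) * x) := by
    simp only [Int.fract]; push_cast; ring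
  have hB0 : (0:ℝ) ≤ (B:ℝ) := by positivity
  have h1 : Int.fract ((B:ℝ)^(i+1) * x) < 1 := Int.fract_lt_one _
  have h2 : (0:ℝ) ≤ (B:ℝ) * Int.fract ((B:ℝ)^i * x) :=
    mul_nonneg hB0 (Int.fract_nonneg _)
  have hnn : 0 ≤ (⌊(B:ℝ)^(i+1) * x⌋ - B * ⌊(B:ℝ)^i * x⌋ : ℤ) := by
    have : (-1 : ℝ) < ((⌊(B:ℝ)^(i+1) * x⌋ - B * ⌊(B:ℝ)^i * x⌋ : ℤ) : ℝ) := by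
      rw [hz]; linarith
    have : (-1 : ℤ) < (⌊(B:ℝ)^(i+1) * x⌋ - B * ⌊(B:ℝ)^i * x⌋ : ℤ) := by exact_mod_cast this
    omega
  rw [dN, ← hz]
  norm_cast
  exact Int.toNat_of_nonneg (by exact_mod_cast hnn)

lemma dN_lt {B : ℕ} (hB : 2 ≤ B) (x : ℝ) (hx : 0 ≤ x) (i : ℕ) : dN B x i < B := by
  have h := dN_cast hB x hx i
  have hf : Int.fract ((B:ℝ)^i * x) < 1 := Int.fract_lt_one _
  have hf2 : (0:ℝ) ≤ Int.fract ((B:ℝ)^(i+1) * x) := Int.fract_nonneg _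
  have hB0 : (0:ℝ) < (B:ℝ) := by positivity
  have : (dN B x i : ℝ) < (B:ℝ) := by
    rw [h]; nlinarith
  exact_mod_cast this

/-- telescoping partial sums of the digit expansion -/
lemma dN_partial {B : ℕ} (hB : 2 ≤ B) (x : ℝ) (hx : 0 ≤ x) (m : ℕ) : ∀ M : ℕ,
    ∑ j ∈ range M, (dN B x (m+j) : ℝ)/(B:ℝ)^(j+1)
      = Int.fract ((B:ℝ)^m * x) - Int.fract ((B:ℝ)^(m+M) * x)/(B:ℝ)^M := by
  have hB0 : (0:ℝ) < (B:ℝ) := by positivity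
  intro M
  induction M with
  | zero => simp
  | succ M ih =>
    rw [Finset.sum_range_succ, ih, dN_cast hB x hx (m+M)]
    have h1 : (B:ℝ)^(M+1) = (B:ℝ)^M * B := by ring
    have h2 : m + (M+1) = (m + M) + 1 := by omega
    rw [h2, h1]
    field_simp
    ring



lemma geom_summable {B : ℕ} (hB : 2 ≤ B) : Summable (fun j : ℕ => ((1:ℝ)/B)^j) := by
  apply summable_geometric_of_lt_one (by positivity)
  rw [div_lt_one (by positivity)]
  exact_mod_cast Nat.lt_of_lt_of_le Nat.one_lt_two hB

lemma pow_tendsto {B : ℕ} (hB : 2 ≤ B) :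
    Filter.Tendsto (fun j : ℕ => ((1:ℝ)/B)^j) Filter.atTop (nhds 0) := by
  apply tendsto_pow_atTop_nhds_zero_of_lt_one (by positivity)
  rw [div_lt_one (by positivity)]
  exact_mod_cast Nat.lt_of_lt_of_le Nat.one_lt_two hB

lemma dN_term_le {B : ℕ} (hB : 2 ≤ B) (x : ℝ) (hx : 0 ≤ x) (m : ℕ) (j : ℕ) :
    (dN B x (m+j) : ℝ)/(B:ℝ)^(j+1) ≤ ((1:ℝ)/B)^j := by
  have hB0 : (0:ℝ) < (B:ℝ) := by positivity
  have h1 : (dN B x (m+j) : ℝ) ≤ (B:ℝ) := by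
    exact_mod_cast (dN_lt hB x hx (m+j)).le
  rw [div_pow, one_pow]
  rw [div_le_div_iff₀ (by positivity) (by positivity)]
  calc (dN B x (m+j) : ℝ) * (B:ℝ)^j ≤ (B:ℝ) * (B:ℝ)^j := by
        apply mul_le_mul_of_nonneg_right h1 (by positivity)
    _ = 1 * (B:ℝ)^(j+1) := by ring

lemma hasSum_tail {B : ℕ} (hB : 2 ≤ B) (x : ℝ) (hx : 0 ≤ x) (m : ℕ) :
    HasSum (fun j : ℕ => (dN B x (m+j) : ℝ)/(B:ℝ)^(j+1)) (Int.fract ((B:ℝ)^m * x)) := by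
  have hB0 : (0:ℝ) < (B:ℝ) := by positivity
  have hsum : Summable (fun j : ℕ => (dN B x (m+j) : ℝ)/(B:ℝ)^(j+1)) :=
    Summable.of_nonneg_of_le (fun j => by positivity) (dN_term_le hB x hx m) (geom_summable hB)
  rw [hsum.hasSum_iff_tendsto_nat]
  have heq : ∀ M : ℕ, ∑ j ∈ range M, (dN B x (m+j) : ℝ)/(B:ℝ)^(j+1)
      = Int.fract ((B:ℝ)^m * x) - Int.fract ((B:ℝ)^(m+M) * x)/(B:ℝ)^M := dN_partial hB x hx m
  simp only [heq]
  have : Filter.Tendsto (fun M : ℕ => Int.fract ((B:ℝ)^(m+M) * x)/(B:ℝ)^M) Filter.atTop (nhds 0) := by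
    apply squeeze_zero (fun M => div_nonneg (Int.fract_nonneg _) (by positivity)) (fun M => ?_) (pow_tendsto hB)
    rw [div_pow, one_pow]
    exact (div_le_div_iff_of_pos_right (by positivity)).2 (Int.fract_lt_one _).le
  simpa using (tendsto_const_nhds (x := Int.fract ((B:ℝ)^m * x))).sub this

lemma nat_select {K : ℕ} (d : Fin K → ℕ) : ∀ t, t ≤ ∑ k, d k →
    ∃ a : Fin K → ℕ, (∀ k, a k ≤ d k) ∧ ∑ k, a k = t := by
  intro t
  induction t with
  | zero => exact fun _ => ⟨fun _ => 0, fun _ => Nat.zero_le _, by simp⟩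
  | succ t ih =>
    intro ht
    obtain ⟨a, ha, hs⟩ := ih (Nat.le_of_succ_le ht)
    have : ∃ k, a k < d k := by
      by_contra hc
      push_neg at hc
      have : ∑ k, d k ≤ ∑ k, a k := Finset.sum_le_sum (fun k _ => hc k)
      omega
    obtain ⟨k, hk⟩ := this
    refine ⟨Function.update a k (a k + 1), fun k' => ?_, ?_⟩
    · rcases eq_or_ne k' k with rfl | hne
      · simp [Function.update_self]; omega
      · simp [Function.update_of_ne hne]; exact ha k'
    · rw [Finset.sum_update_of_mem (Finset.mem_univ k)]
      have h2 : ∑ k', a k' = a k + ∑ k' ∈ univ \ {k}, a k' := by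
        rw [← Finset.sum_sdiff (Finset.singleton_subset_iff.2 (Finset.mem_univ k))]
        rw [Finset.sum_singleton]; ring
      omega

lemma fract_add_eq {u v : ℝ} (hle : Int.fract u ≤ Int.fract (u+v)) :
    Int.fract u + Int.fract v = Int.fract (u+v) := by
  have hz : ((⌊u+v⌋ - ⌊u⌋ - ⌊v⌋ : ℤ) : ℝ) = Int.fract u + Int.fract v - Int.fract (u+v) := by
    simp only [Int.fract]; push_cast; ring
  have h0u := Int.fract_nonneg u
  have h0v := Int.fract_nonneg v
  have h1u := Int.fract_lt_one u
  have h1v := Int.fract_lt_one v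
  have h0uv := Int.fract_nonneg (u+v)
  have h1uv := Int.fract_lt_one (u+v)
  have hb1 : (-1:ℤ) < ⌊u+v⌋ - ⌊u⌋ - ⌊v⌋ := by
    have : (-1:ℝ) < ((⌊u+v⌋ - ⌊u⌋ - ⌊v⌋ : ℤ) : ℝ) := by rw [hz]; linarith
    exact_mod_cast this
  have hb2 : (⌊u+v⌋ - ⌊u⌋ - ⌊v⌋ : ℤ) < 2 := by
    have : ((⌊u+v⌋ - ⌊u⌋ - ⌊v⌋ : ℤ) : ℝ) < 2 := by rw [hz]; linarith
    exact_mod_cast this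
  have hcase : (⌊u+v⌋ - ⌊u⌋ - ⌊v⌋ : ℤ) = 0 ∨ (⌊u+v⌋ - ⌊u⌋ - ⌊v⌋ : ℤ) = 1 := by omega
  rcases hcase with hc | hc
  · rw [hc] at hz; push_cast at hz; linarith
  · rw [hc] at hz; push_cast at hz; exfalso; linarith



lemma peel {B : ℕ} (hB : 2 ≤ B) {K : ℕ} (f : Fin K → ℝ)
    (hf0 : ∀ k, 0 ≤ f k) (hf1 : ∀ k, f k < 1) (hsum : 1 ≤ ∑ k, f k) :
    ∃ g : Fin K → ℝ, (∀ k, 0 ≤ g k) ∧ (∀ k, g k ≤ f k) ∧ (∑ k, g k = 1) ∧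
      ∀ k m, Int.fract ((B:ℝ)^m * g k) ≤ Int.fract ((B:ℝ)^m * f k) := by
  have hB0 : (0:ℝ) < (B:ℝ) := by positivity
  set u : ℕ → ℕ := fun i => ∑ k, dN B (f k) i with hu
  let capt : ℕ → ℕ × ℕ := fun i =>
    Nat.rec (B, min (u 0) B)
      (fun j p => (B * (p.1 - p.2), min (u (j+1)) (B * (p.1 - p.2)))) i
  have hcapt0 : capt 0 = (B, min (u 0) B) := rfl
  have hcaptS : ∀ j, capt (j+1)
      = (B * ((capt j).1 - (capt j).2),
         min (u (j+1)) (B * ((capt j).1 - (capt j).2))) := fun j => rfl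
  have ht_min : ∀ i, (capt i).2 = min (u i) (capt i).1 := by
    intro i; cases i with
    | zero => rfl
    | succ j => rw [hcaptS]
  have ht_le_u : ∀ i, (capt i).2 ≤ u i := fun i => (ht_min i) ▸ min_le_left _ _
  have ht_le_c : ∀ i, (capt i).2 ≤ (capt i).1 := fun i => (ht_min i) ▸ min_le_right _ _
  have hsel : ∀ i, ∃ a : Fin K → ℕ, (∀ k, a k ≤ dN B (f k) i) ∧ ∑ k, a k = (capt i).2 :=
    fun i => nat_select _ _ (ht_le_u i)
  choose a ha hasum using hsel
  -- digit expansion of f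
  have hfexp : ∀ k, HasSum (fun i : ℕ => (dN B (f k) i : ℝ)/(B:ℝ)^(i+1)) (f k) := by
    intro k
    have h := hasSum_tail hB (f k) (hf0 k) 0
    simpa [Int.fract_eq_self.2 ⟨hf0 k, hf1 k⟩] using h
  have hterm_nonneg : ∀ k (i : ℕ), (0:ℝ) ≤ (a i k : ℝ)/(B:ℝ)^(i+1) := fun k i => by positivity
  have hterm_le : ∀ k (i : ℕ), (a i k : ℝ)/(B:ℝ)^(i+1) ≤ (dN B (f k) i : ℝ)/(B:ℝ)^(i+1) := by
    intro k i; gcongr; exact_mod_cast ha i k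
  have hsummable_a : ∀ k, Summable (fun i : ℕ => (a i k : ℝ)/(B:ℝ)^(i+1)) := fun k =>
    Summable.of_nonneg_of_le (hterm_nonneg k) (hterm_le k) (hfexp k).summable
  refine ⟨fun k => ∑' i, (a i k : ℝ)/(B:ℝ)^(i+1), fun k => tsum_nonneg (hterm_nonneg k), ?_, ?_, ?_⟩
  · intro k
    rw [← (hfexp k).tsum_eq]
    exact Summable.tsum_le_tsum (hterm_le k) (hsummable_a k) (hfexp k).summable
  · -- sum over k equals 1
    have hcapbound : ∀ i, ((capt i).1 : ℝ) ≤ (B:ℝ) * ∑ k, Int.fract ((B:ℝ)^i * f k) := by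
      intro i
      induction i with
      | zero =>
        rw [hcapt0]
        have he : ∑ k, Int.fract ((B:ℝ)^0 * f k) = ∑ k, f k :=
          Finset.sum_congr rfl (fun k _ => by
            rw [pow_zero, one_mul, Int.fract_eq_self.2 ⟨hf0 k, hf1 k⟩])
        rw [he]
        nlinarith
      | succ i ih =>
        rcases le_or_gt (u i) ((capt i).1) with hcase | hcase
        · have ht_eq : (capt i).2 = u i := by rw [ht_min i]; exact min_eq_left hcase
          have hcast : (((capt (i+1)).1 : ℕ) : ℝ)
              = (B:ℝ) * (((capt i).1 : ℝ) - ((capt i).2 : ℝ)) := by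
            rw [hcaptS]
            push_cast [Nat.cast_sub (ht_le_c i)]
            ring
          have hud : ((u i : ℕ) : ℝ)
              = (B:ℝ) * (∑ k, Int.fract ((B:ℝ)^i * f k)) - ∑ k, Int.fract ((B:ℝ)^(i+1) * f k) := by
            rw [hu]
            push_cast
            rw [Finset.sum_congr rfl (fun k _ => dN_cast hB (f k) (hf0 k) i)]
            rw [Finset.sum_sub_distrib, Finset.mul_sum]
          rw [hcast, ht_eq, hud]
          have hles : ((capt i).1 : ℝ) - ((B:ℝ) * (∑ k, Int.fract ((B:ℝ)^i * f k))
              - ∑ k, Int.fract ((B:ℝ)^(i+1) * f k)) ≤ ∑ k, Int.fract ((B:ℝ)^(i+1) * f k) := by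
            linarith
          exact mul_le_mul_of_nonneg_left hles hB0.le
        · have ht_eq : (capt i).2 = (capt i).1 := by
            rw [ht_min i]; exact min_eq_right hcase.le
          have hz0 : (capt (i+1)).1 = 0 := by rw [hcaptS i, ht_eq]; simp
          rw [hz0]
          simp only [Nat.cast_zero]
          apply mul_nonneg hB0.le
          exact Finset.sum_nonneg (fun k _ => Int.fract_nonneg _)
    have hrho : ∀ m : ℕ, ∑ i ∈ range m, ((capt i).2 : ℝ)/(B:ℝ)^(i+1)
        = 1 - ((capt m).1 : ℝ)/(B:ℝ)^(m+1) := by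
      intro m
      induction m with
      | zero => rw [hcapt0]; simp; field_simp; ring
      | succ m ih =>
        rw [Finset.sum_range_succ, ih]
        have hcast : (((capt (m+1)).1 : ℕ) : ℝ)
            = (B:ℝ) * (((capt m).1 : ℝ) - ((capt m).2 : ℝ)) := by
          rw [hcaptS]
          push_cast [Nat.cast_sub (ht_le_c m)]
          ring
        rw [hcast]
        have hBp : (B:ℝ)^(m+1) ≠ 0 := by positivity
        have hBp2 : (B:ℝ)^(m+1+1) ≠ 0 := by positivity
        field_simp
        ring
    have hrw : ∀ i : ℕ, (K:ℝ) * ((1:ℝ)/B)^i = ((K:ℝ)*(B:ℝ))/(B:ℝ)^(i+1) := by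
      intro i
      rw [div_pow, one_pow]
      field_simp
      ring
    have hKB : ∀ i : ℕ, ((capt i).2 : ℝ)/(B:ℝ)^(i+1) ≤ (K:ℝ) * ((1:ℝ)/B)^i := by
      intro i
      have h1 : (capt i).2 ≤ K * B := by
        calc (capt i).2 ≤ u i := ht_le_u i
          _ = ∑ k, dN B (f k) i := rfl
          _ ≤ ∑ _k : Fin K, B := Finset.sum_le_sum (fun k _ => (dN_lt hB (f k) (hf0 k) i).le)
          _ = K * B := by simp [Finset.sum_const, mul_comm]
      have h2 : ((capt i).2 : ℝ) ≤ (K:ℝ) * (B:ℝ) := by exact_mod_cast h1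
      rw [hrw i]
      gcongr
    have hsummable_t : Summable (fun i : ℕ => ((capt i).2 : ℝ)/(B:ℝ)^(i+1)) :=
      Summable.of_nonneg_of_le (fun i => by positivity) hKB ((geom_summable hB).mul_left _)
    have hsum_t : HasSum (fun i : ℕ => ((capt i).2 : ℝ)/(B:ℝ)^(i+1)) 1 := by
      rw [hsummable_t.hasSum_iff_tendsto_nat]
      simp only [hrho]
      have hz : Filter.Tendsto (fun m : ℕ => ((capt m).1 : ℝ)/(B:ℝ)^(m+1))
          Filter.atTop (nhds 0) := by
        apply squeeze_zero (fun m => by positivity) (fun m => ?_)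
          (by simpa using (pow_tendsto hB).const_mul (K:ℝ))
        have hrw' : (K:ℝ) * ((B:ℝ)^m)⁻¹ = ((K:ℝ)*(B:ℝ))/(B:ℝ)^(m+1) := by
          field_simp
          ring
        rw [hrw']
        gcongr
        calc ((capt m).1 : ℝ) ≤ (B:ℝ) * ∑ k, Int.fract ((B:ℝ)^m * f k) := hcapbound m
          _ ≤ (B:ℝ) * ∑ _k : Fin K, (1:ℝ) := by
              apply mul_le_mul_of_nonneg_left
                (Finset.sum_le_sum (fun k _ => (Int.fract_lt_one _).le)) hB0.le
          _ = (K:ℝ) * (B:ℝ) := by simp [mul_comm]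
      simpa using tendsto_const_nhds.sub hz
    calc ∑ k, ∑' i, (a i k : ℝ)/(B:ℝ)^(i+1)
        = ∑' i, ∑ k, (a i k : ℝ)/(B:ℝ)^(i+1) := (Summable.tsum_finsetSum (fun k _ => hsummable_a k)).symm
      _ = ∑' i, ((capt i).2 : ℝ)/(B:ℝ)^(i+1) := by
          apply tsum_congr
          intro i
          rw [← Finset.sum_div]
          congr 1
          exact_mod_cast hasum i
      _ = 1 := hsum_t.tsum_eq
  · -- the fract property
    intro k m
    have htail_d : HasSum (fun j : ℕ => (dN B (f k) (m+j) : ℝ)/(B:ℝ)^(j+1))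
        (Int.fract ((B:ℝ)^m * f k)) := hasSum_tail hB (f k) (hf0 k) m
    have htle : ∀ j : ℕ, (a (j+m) k : ℝ)/(B:ℝ)^(j+1) ≤ (dN B (f k) (m+j) : ℝ)/(B:ℝ)^(j+1) := by
      intro j
      gcongr
      have hj := ha (j+m) k
      rw [add_comm m j]
      exact_mod_cast hj
    have htail_a_summ : Summable (fun j : ℕ => (a (j+m) k : ℝ)/(B:ℝ)^(j+1)) :=
      Summable.of_nonneg_of_le (fun j => by positivity) htle htail_d.summable
    have hT_le : ∑' j, (a (j+m) k : ℝ)/(B:ℝ)^(j+1) ≤ Int.fract ((B:ℝ)^m * f k) := by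
      rw [← htail_d.tsum_eq]
      exact Summable.tsum_le_tsum htle htail_a_summ htail_d.summable
    have hT0 : (0:ℝ) ≤ ∑' j, (a (j+m) k : ℝ)/(B:ℝ)^(j+1) := tsum_nonneg (fun j => by positivity)
    have hsplit := Summable.sum_add_tsum_nat_add (f := fun i => (a i k : ℝ)/(B:ℝ)^(i+1)) m (hsummable_a k)
    have hexp : (B:ℝ)^m * (∑' i, (a i k : ℝ)/(B:ℝ)^(i+1))
        = ((∑ i ∈ range m, a i k * B^(m-1-i) : ℕ) : ℝ) + ∑' j, (a (j+m) k : ℝ)/(B:ℝ)^(j+1) := by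
      rw [← hsplit, mul_add]
      beta_reduce
      congr 1
      · push_cast
        rw [Finset.mul_sum]
        apply Finset.sum_congr rfl
        intro i hi
        have him : i < m := Finset.mem_range.1 hi
        have hpw : (B:ℝ)^m = (B:ℝ)^(i+1) * (B:ℝ)^(m-1-i) := by
          rw [← pow_add]; congr 1; omega
        rw [hpw]
        field_simp
      · rw [← tsum_mul_left]
        apply tsum_congr
        intro j
        have hpw : (B:ℝ)^(j+m+1) = (B:ℝ)^(j+1) * (B:ℝ)^m := by
          rw [← pow_add]; congr 1; omega
        rw [hpw]
        field_simp
    have hT_lt : ∑' j, (a (j+m) k : ℝ)/(B:ℝ)^(j+1) < 1 :=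
      lt_of_le_of_lt hT_le (Int.fract_lt_one _)
    rw [hexp]
    rw [show (((∑ i ∈ range m, a i k * B^(m-1-i) : ℕ) : ℝ))
        = (((∑ i ∈ range m, a i k * B^(m-1-i) : ℕ) : ℤ) : ℝ) by push_cast; ring]
    rw [Int.fract_intCast_add, Int.fract_eq_self.2 ⟨hT0, hT_lt⟩]
    exact hT_le

lemma pack {B : ℕ} (hB : 2 ≤ B) {K : ℕ} : ∀ (s : ℕ) (f : Fin K → ℝ),
    (∀ k, 0 ≤ f k) → (∀ k, f k < 1) → (∑ k, f k = (s:ℝ)) →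
    ∃ g : Fin s → Fin K → ℝ, (∀ j k, 0 ≤ g j k) ∧ (∀ j, ∑ k, g j k = 1) ∧
      (∀ k, ∑ j, g j k = f k) ∧
      (∀ k m, ∑ j, Int.fract ((B:ℝ)^m * g j k) ≤ Int.fract ((B:ℝ)^m * f k)) := by
  intro s
  induction s with
  | zero =>
    intro f hf0 hf1 hfs
    have hf : ∀ k, f k = 0 := by
      intro k
      have h := (Finset.sum_eq_zero_iff_of_nonneg (fun k _ => hf0 k)).1 (by simpa using hfs)
      exact h k (Finset.mem_univ k)
    exact ⟨fun j => j.elim0, fun j => j.elim0, fun j => j.elim0,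
      fun k => by simp [hf k], fun k m => by simp [Int.fract_nonneg]⟩
  | succ s ih =>
    intro f hf0 hf1 hfs
    have hsum1 : 1 ≤ ∑ k, f k := by rw [hfs]; exact_mod_cast Nat.one_le_iff_ne_zero.2 (Nat.succ_ne_zero s)
    obtain ⟨g1, hg10, hg1le, hg1sum, hg1fr⟩ := peel hB f hf0 hf1 hsum1
    set f' : Fin K → ℝ := fun k => f k - g1 k with hf'
    have hf'0 : ∀ k, 0 ≤ f' k := fun k => by simp [hf']; exact hg1le k
    have hf'1 : ∀ k, f' k < 1 := fun k => by
      simp only [hf']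
      calc f k - g1 k ≤ f k - 0 := by linarith [hg10 k]
        _ < 1 := by rw [sub_zero]; exact hf1 k
    have hf's : ∑ k, f' k = (s:ℝ) := by
      simp only [hf', Finset.sum_sub_distrib, hg1sum, hfs]
      push_cast
      ring
    obtain ⟨g', hg'0, hg'1, hg'2, hg'3⟩ := ih f' hf'0 hf'1 hf's
    refine ⟨fun j => Fin.cases g1 g' j, ?_, ?_, ?_, ?_⟩
    · intro j k
      induction j using Fin.cases with
      | zero => simpa using hg10 k
      | succ j => simpa using hg'0 j k
    · intro j
      induction j using Fin.cases with
      | zero => simpa using hg1sum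
      | succ j => simpa using hg'1 j
    · intro k
      rw [Fin.sum_univ_succ]
      simp only [Fin.cases_zero, Fin.cases_succ]
      rw [hg'2 k]
      simp [hf']
    · intro k m
      rw [Fin.sum_univ_succ]
      simp only [Fin.cases_zero, Fin.cases_succ]
      have hkey : Int.fract ((B:ℝ)^m * g1 k) + Int.fract ((B:ℝ)^m * f' k)
          = Int.fract ((B:ℝ)^m * f k) := by
        have hsplit : (B:ℝ)^m * f k = (B:ℝ)^m * g1 k + (B:ℝ)^m * f' k := by
          simp only [hf']; ring
        rw [hsplit]
        apply fract_add_eq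
        rw [← hsplit]
        exact hg1fr k m
      calc Int.fract ((B:ℝ)^m * g1 k) + ∑ j : Fin s, Int.fract ((B:ℝ)^m * g' j k)
          ≤ Int.fract ((B:ℝ)^m * g1 k) + Int.fract ((B:ℝ)^m * f' k) := by
            linarith [hg'3 k m]
        _ = Int.fract ((B:ℝ)^m * f k) := hkey

lemma step {B : ℕ} (hB : 2 ≤ B) {n : ℕ} (x : Fin (n+1) → ℝ)
    (hx : x ∈ stdSimplex ℝ (Fin (n+1))) :
    ∃ y : Fin B → (Fin (n+1) → ℝ),
      (∀ i, y i ∈ stdSimplex ℝ (Fin (n+1))) ∧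
      (∀ j, (∑ i, y i j) = (B:ℝ) * x j) ∧
      (∀ m : ℕ, ∑ i, (∑ k, Int.fract ((B:ℝ)^m * y i k))
        ≤ ∑ k, Int.fract ((B:ℝ)^(m+1) * x k)) := by
  obtain ⟨hx0, hx1⟩ := hx
  have hB0 : (0:ℝ) < (B:ℝ) := by positivity
  have hBx0 : ∀ k, (0:ℝ) ≤ (B:ℝ) * x k := fun k => mul_nonneg hB0.le (hx0 k)
  set mk : Fin (n+1) → ℕ := fun k => (⌊(B:ℝ) * x k⌋).toNat with hmk
  have hmk_cast : ∀ k, ((mk k : ℕ) : ℝ) = (⌊(B:ℝ) * x k⌋ : ℝ) := fun k => by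
    have h := Int.toNat_of_nonneg (Int.floor_nonneg.2 (hBx0 k))
    show (((⌊(B:ℝ) * x k⌋.toNat : ℕ)) : ℝ) = ((⌊(B:ℝ) * x k⌋ : ℤ) : ℝ)
    exact_mod_cast h
  set V : ℕ := ∑ k, mk k with hV
  have hVB : V ≤ B := by
    have h1 : ((V:ℕ):ℝ) ≤ (B:ℝ) := by
      rw [hV]
      push_cast
      calc ∑ k, ((mk k : ℕ):ℝ) = ∑ k, (⌊(B:ℝ) * x k⌋ : ℝ) :=
            Finset.sum_congr rfl (fun k _ => hmk_cast k)
        _ ≤ ∑ k, (B:ℝ) * x k := Finset.sum_le_sum (fun k _ => Int.floor_le _)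
        _ = (B:ℝ) := by rw [← Finset.mul_sum, hx1, mul_one]
    exact_mod_cast h1
  set s : ℕ := B - V with hs
  have hsV : B = s + V := by omega
  set f : Fin (n+1) → ℝ := fun k => Int.fract ((B:ℝ) * x k) with hf
  have hf0 : ∀ k, 0 ≤ f k := fun k => Int.fract_nonneg _
  have hf1 : ∀ k, f k < 1 := fun k => Int.fract_lt_one _
  have hfs : ∑ k, f k = (s:ℝ) := by
    have : ∑ k, f k = (B:ℝ) - (V:ℝ) := by
      rw [hf]
      simp only [Int.fract]
      rw [Finset.sum_sub_distrib, ← Finset.mul_sum, hx1, mul_one]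
      congr 1
      rw [hV]
      push_cast
      exact (Finset.sum_congr rfl (fun k _ => (hmk_cast k))).symm
    rw [this, hs]
    push_cast [Nat.cast_sub hVB]
    ring
  obtain ⟨g, hg0, hg1, hg2, hg3⟩ := pack hB s f hf0 hf1 hfs
  -- vertex enumeration
  have hcard : Fintype.card (Σ k : Fin (n+1), Fin (mk k)) = V := by
    simp [Fintype.card_sigma, hV]
  let E : (Σ k : Fin (n+1), Fin (mk k)) ≃ Fin V := Fintype.equivFinOfCardEq hcard
  set vtx : Fin (n+1) → (Fin (n+1) → ℝ) := fun k => fun j => if j = k then 1 else 0 with hvtx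
  let e : Fin B ≃ (Fin s ⊕ Fin V) := (finCongr hsV).trans finSumFinEquiv.symm
  set w : (Fin s ⊕ Fin V) → (Fin (n+1) → ℝ) :=
    Sum.elim g (fun v => vtx (E.symm v).1) with hw
  have hsum_y : ∀ φ : (Fin (n+1) → ℝ) → ℝ,
      ∑ i, φ (w (e i)) = (∑ j : Fin s, φ (g j)) + ∑ k, (mk k : ℝ) * φ (vtx k) := by
      intro φ
      rw [Equiv.sum_comp e (fun z => φ (w z))]
      rw [Fintype.sum_sum_type]
      congr 1
      calc ∑ v : Fin V, φ (w (Sum.inr v))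
          = ∑ σ : (Σ k : Fin (n+1), Fin (mk k)), φ (vtx σ.1) :=
            Equiv.sum_comp E.symm (fun σ => φ (vtx σ.1))
        _ = ∑ k, ∑ _j : Fin (mk k), φ (vtx k) := by
            rw [← Finset.univ_sigma_univ, Finset.sum_sigma]
        _ = ∑ k, (mk k : ℝ) * φ (vtx k) := by
            apply Finset.sum_congr rfl
            intro k _
            rw [Finset.sum_const, Finset.card_univ, Fintype.card_fin, nsmul_eq_mul]
  have hvtx_mem : ∀ k, vtx k ∈ stdSimplex ℝ (Fin (n+1)) := by
    intro k
    constructor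
    · intro j
      rw [hvtx]
      dsimp only
      split <;> norm_num
    · rw [hvtx]
      simp
  refine ⟨fun i => w (e i), ?_, ?_, ?_⟩
  · intro i
    show w (e i) ∈ stdSimplex ℝ (Fin (n+1))
    rcases e i with j | v
    · exact ⟨hg0 j, hg1 j⟩
    · exact hvtx_mem _
  · intro j
    show ∑ i, w (e i) j = (B:ℝ) * x j
    have h := hsum_y (fun p => p j)
    beta_reduce at h
    rw [h]
    have h2 : ∑ k, (mk k : ℝ) * vtx k j = (mk j : ℝ) := by
      rw [hvtx]
      simp [Finset.sum_ite_eq, Finset.sum_ite_eq']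
    rw [h2, hg2 j, hf, hmk_cast j]
    exact Int.fract_add_floor _
  · intro m
    show ∑ i, ∑ k, Int.fract ((B:ℝ)^m * w (e i) k) ≤ ∑ k, Int.fract ((B:ℝ)^(m+1) * x k)
    have h := hsum_y (fun p => ∑ k, Int.fract ((B:ℝ)^m * p k))
    beta_reduce at h
    rw [h]
    have hz : ∀ k, ∑ k', Int.fract ((B:ℝ)^m * vtx k k') = 0 := by
      intro k
      apply Finset.sum_eq_zero
      intro k' _
      rw [hvtx]
      dsimp only
      split
      · rw [mul_one]
        have : ((B:ℝ))^m = (((B^m : ℕ)):ℝ) := by push_cast; ring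
        rw [this, Int.fract_natCast]
      · rw [mul_zero, Int.fract_zero]
    have h3 : ∑ k, (mk k : ℝ) * (∑ k', Int.fract ((B:ℝ)^m * vtx k k')) = 0 := by
      apply Finset.sum_eq_zero
      intro k _
      rw [hz k, mul_zero]
    rw [h3, add_zero]
    rw [Finset.sum_comm]
    calc ∑ k, ∑ j : Fin s, Int.fract ((B:ℝ)^m * g j k)
        ≤ ∑ k, Int.fract ((B:ℝ)^m * f k) := Finset.sum_le_sum (fun k _ => hg3 k m)
      _ = ∑ k, Int.fract ((B:ℝ)^(m+1) * x k) := by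
          apply Finset.sum_congr rfl
          intro k _
          rw [hf]
          exact fract_pow_fract m (x k)


end Stmt4Aux

open Finset Stmt4Aux in
theorem stmt4 (B n : ℕ) (hB : 2 ≤ B) (hn : 1 ≤ n)
    (h : (Fin (n + 1) → ℝ) → ℝ)
    (hbdd : ∃ M : ℝ, ∀ x ∈ stdSimplex ℝ (Fin (n + 1)), |h x| ≤ M)
    (hac : ∀ y : Fin B → (Fin (n + 1) → ℝ),
      (∀ i, y i ∈ stdSimplex ℝ (Fin (n + 1))) →
      h (fun j => (∑ i, y i j) / (B : ℝ)) ≤ 1 + (1 / (B : ℝ)) * ∑ i, h (y i))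
    (hvert : ∀ k : Fin (n + 1), h (fun j => if j = k then (1 : ℝ) else 0) ≤ 0) :
    ∀ x ∈ stdSimplex ℝ (Fin (n + 1)), h x ≤ ∑ k : Fin (n + 1), HB B (x k) := by
  obtain ⟨M0, hM0⟩ := hbdd
  set M := max M0 0 with hM
  have hM0' : (0:ℝ) ≤ M := le_max_right _ _
  have hMb : ∀ z ∈ stdSimplex ℝ (Fin (n+1)), h z ≤ M := fun z hz =>
    (le_abs_self _).trans ((hM0 z hz).trans (le_max_left _ _))
  have hB0 : (0:ℝ) < (B:ℝ) := by positivity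
  have hvtx_or : ∀ z ∈ stdSimplex ℝ (Fin (n+1)),
      (∃ k, z = fun j => if j = k then (1:ℝ) else 0) ∨ (∀ k, z k < 1) := by
    intro z hz
    by_cases hex : ∃ k, z k = 1
    · left
      obtain ⟨k, hk⟩ := hex
      refine ⟨k, funext fun j => ?_⟩
      by_cases hj : j = k
      · simp only [hj, if_pos rfl]
        exact hk ▸ rfl
      · simp only [if_neg hj]
        have hadd := Finset.add_sum_erase univ z (Finset.mem_univ k)
        have h0 : ∑ j' ∈ univ.erase k, z j' = 0 := by
          rw [hz.2] at hadd
          rw [hk] at hadd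
          linarith
        exact (Finset.sum_eq_zero_iff_of_nonneg (fun j' _ => hz.1 j')).1 h0 j
          (Finset.mem_erase.2 ⟨hj, Finset.mem_univ j⟩)
    · right
      push_neg at hex
      intro k
      have hle : z k ≤ 1 := by
        calc z k ≤ ∑ j, z j := Finset.single_le_sum (fun j _ => hz.1 j) (Finset.mem_univ k)
          _ = 1 := hz.2
      exact lt_of_le_of_ne hle (hex k)
  have hP0 : ∀ z ∈ stdSimplex ℝ (Fin (n+1)), (∀ k, z k < 1) →
      ∑ k, Int.fract ((B:ℝ)^0 * z k) = 1 := by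
    intro z hz hlt
    rw [← hz.2]
    apply Finset.sum_congr rfl
    intro k _
    rw [pow_zero, one_mul, Int.fract_eq_self.2 ⟨hz.1 k, hlt k⟩]
  have hPvtx : ∀ (k : Fin (n+1)) (m : ℕ),
      ∑ k', Int.fract ((B:ℝ)^m * (if k' = k then (1:ℝ) else 0)) = 0 := by
    intro k m
    apply Finset.sum_eq_zero
    intro k' _
    split
    · rw [mul_one, (Nat.cast_pow B m).symm, Int.fract_natCast]
    · rw [mul_zero, Int.fract_zero]
  have hdiv : ∀ (c:ℝ) (m:ℕ), (1/(B:ℝ)) * (c/(B:ℝ)^m) = c/(B:ℝ)^(m+1) := by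
    intro c m
    rw [div_mul_div_comm, one_mul, mul_comm ((B:ℝ)) ((B:ℝ)^m), ← pow_succ]
  have key : ∀ N : ℕ, ∀ z ∈ stdSimplex ℝ (Fin (n+1)),
      h z ≤ (∑ m ∈ Finset.range N, (∑ k, Int.fract ((B:ℝ)^m * z k)) / (B:ℝ)^m)
        + M * (∑ k, Int.fract ((B:ℝ)^N * z k)) / (B:ℝ)^N := by
    intro N
    induction N with
    | zero =>
      intro z hz
      simp only [Finset.range_zero, Finset.sum_empty, pow_zero, div_one, zero_add, one_mul]
      rcases hvtx_or z hz with ⟨k, rfl⟩ | hlt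
      · have h0 := hvert k
        have hnn : (0:ℝ) ≤ ∑ k', Int.fract ((fun j => if j = k then (1:ℝ) else 0) k') := by
          apply Finset.sum_nonneg
          intro k' _
          exact Int.fract_nonneg _
        nlinarith
      · have h1 : ∑ k, Int.fract (z k) = 1 := by
          have := hP0 z hz hlt
          simpa using this
        rw [h1, mul_one]
        exact hMb z hz
    | succ N ihN =>
      intro z hz
      rcases hvtx_or z hz with ⟨k, rfl⟩ | hlt
      · refine (hvert k).trans (add_nonneg ?_ ?_)
        · apply Finset.sum_nonneg
          intro m _
          apply div_nonneg ?_ (by positivity)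
          exact Finset.sum_nonneg (fun k' _ => Int.fract_nonneg _)
        · apply div_nonneg ?_ (by positivity)
          exact mul_nonneg hM0' (Finset.sum_nonneg (fun k' _ => Int.fract_nonneg _))
      · obtain ⟨y, hy_mem, hy_coord, hy_phi⟩ := step hB z hz
        have hz_eq : (fun j => (∑ i, y i j) / (B:ℝ)) = z := funext fun j => by
          rw [hy_coord j]
          field_simp
        have h1 : h z ≤ 1 + (1/(B:ℝ)) * ∑ i, h (y i) := by
          have := hac y hy_mem
          rwa [hz_eq] at this
        have h2 : ∑ i, h (y i)
            ≤ ∑ m ∈ Finset.range N, (∑ i, ∑ k, Int.fract ((B:ℝ)^m * y i k)) / (B:ℝ)^m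
              + M * (∑ i, ∑ k, Int.fract ((B:ℝ)^N * y i k)) / (B:ℝ)^N := by
          have hle := Finset.sum_le_sum (fun i (_ : i ∈ univ) => ihN (y i) (hy_mem i))
          refine hle.trans (le_of_eq ?_)
          rw [Finset.sum_add_distrib]
          congr 1
          · rw [Finset.sum_comm]
            apply Finset.sum_congr rfl
            intro m _
            rw [Finset.sum_div]
          · rw [← Finset.sum_div, ← Finset.mul_sum]
        have h4 : ∑ m ∈ Finset.range N, (∑ i, ∑ k, Int.fract ((B:ℝ)^m * y i k)) / (B:ℝ)^m
              + M * (∑ i, ∑ k, Int.fract ((B:ℝ)^N * y i k)) / (B:ℝ)^N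
            ≤ ∑ m ∈ Finset.range N, (∑ k, Int.fract ((B:ℝ)^(m+1) * z k)) / (B:ℝ)^m
              + M * (∑ k, Int.fract ((B:ℝ)^(N+1) * z k)) / (B:ℝ)^N := by
          apply add_le_add
          · apply Finset.sum_le_sum
            intro m _
            gcongr
            exact hy_phi m
          · gcongr <;> first
              | exact hM0'
              | exact hy_phi N
        have h5 : h z ≤ 1 + (1/(B:ℝ)) *
            (∑ m ∈ Finset.range N, (∑ k, Int.fract ((B:ℝ)^(m+1) * z k)) / (B:ℝ)^m
              + M * (∑ k, Int.fract ((B:ℝ)^(N+1) * z k)) / (B:ℝ)^N) := by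
          have hh := mul_le_mul_of_nonneg_left (h2.trans h4) (by positivity : (0:ℝ) ≤ 1/(B:ℝ))
          linarith
        refine h5.trans (le_of_eq ?_)
        rw [Finset.sum_range_succ']
        rw [hP0 z hz hlt]
        rw [pow_zero, div_one]
        rw [mul_add, Finset.mul_sum]
        simp only [hdiv]
        ring
  -- conclusion from key via limit
  intro x hx
  have hsumk : ∀ k : Fin (n+1), Summable (fun m : ℕ => Int.fract ((B:ℝ)^m * x k) / (B:ℝ)^m) := by
    intro k
    apply Summable.of_nonneg_of_le
      (fun m => div_nonneg (Int.fract_nonneg _) (by positivity))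
      (fun m => ?_) (geom_summable hB)
    rw [div_pow, one_pow]
    gcongr
    · exact (Int.fract_lt_one _).le
  have hpart : ∀ N : ℕ, (∑ m ∈ Finset.range N, (∑ k, Int.fract ((B:ℝ)^m * x k)) / (B:ℝ)^m)
      ≤ ∑ k : Fin (n+1), HB B (x k) := by
    intro N
    have hre : (∑ m ∈ Finset.range N, (∑ k, Int.fract ((B:ℝ)^m * x k)) / (B:ℝ)^m)
        = ∑ k : Fin (n+1), ∑ m ∈ Finset.range N, Int.fract ((B:ℝ)^m * x k) / (B:ℝ)^m := by
      rw [Finset.sum_comm]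
      apply Finset.sum_congr rfl
      intro m _
      rw [Finset.sum_div]
    rw [hre]
    apply Finset.sum_le_sum
    intro k _
    exact Summable.sum_le_tsum (Finset.range N)
      (fun m _ => div_nonneg (Int.fract_nonneg _) (by positivity)) (hsumk k)
  have herr : ∀ N : ℕ, M * (∑ k, Int.fract ((B:ℝ)^N * x k)) / (B:ℝ)^N
      ≤ (M * (n+1)) * ((1:ℝ)/(B:ℝ))^N := by
    intro N
    have hsb : (∑ k, Int.fract ((B:ℝ)^N * x k)) ≤ ((n:ℝ)+1) := by
      calc ∑ k, Int.fract ((B:ℝ)^N * x k) ≤ ∑ _k : Fin (n+1), (1:ℝ) :=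
            Finset.sum_le_sum (fun k _ => (Int.fract_lt_one _).le)
        _ = ((n:ℝ)+1) := by simp
    have h1 : ((1:ℝ)/(B:ℝ))^N = 1/(B:ℝ)^N := by rw [div_pow, one_pow]
    rw [h1, mul_one_div]
    apply (div_le_div_iff_of_pos_right (by positivity : (0:ℝ) < (B:ℝ)^N)).2
    have := mul_le_mul_of_nonneg_left hsb hM0'
    push_cast
    linarith
  have hlim : Filter.Tendsto
      (fun N : ℕ => (∑ k : Fin (n+1), HB B (x k)) + (M * (n+1)) * ((1:ℝ)/(B:ℝ))^N)
      Filter.atTop (nhds (∑ k : Fin (n+1), HB B (x k))) := by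
    have := (pow_tendsto hB).const_mul (M * ((n:ℝ)+1))
    simpa using tendsto_const_nhds.add this
  apply ge_of_tendsto' hlim
  intro N
  calc h x ≤ (∑ m ∈ Finset.range N, (∑ k, Int.fract ((B:ℝ)^m * x k)) / (B:ℝ)^m)
        + M * (∑ k, Int.fract ((B:ℝ)^N * x k)) / (B:ℝ)^N := key N x hx
    _ ≤ (∑ k : Fin (n+1), HB B (x k)) + (M * (n+1)) * ((1:ℝ)/(B:ℝ))^N :=
        add_le_add (hpart N) (herr N)
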